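/- (Singleton bound) Let C ⊆ V be a (P,π,w)-code of size K with minimum distance d_w(C). Set λ = ⌊(d_w(C) − m_w)/M_w⌋ and μ = max over ideals I of P with |I| = λ of Σ_{i∈I} k_i. Then K ≤ q^{n−μ}. -/

import Mathlib

attribute [local instance] Classical.propDecidable

noncomputable section

variable {ι F : Type*}

section Defs
variable [Fintype ι] [PartialOrder ι] [Field F] [Fintype F] {k : ι → ℕ}

/-- block support -/
def suppB (u : ∀ i, Fin (k i) → F) : Finset ι :=
  Finset.univ.filter fun i => u i ≠ 0

/-- order ideal generated by the block support -/
def idealOf (u : ∀ i, Fin (k i) → F) : Finset ι :=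
  Finset.univ.filter fun i => ∃ j ∈ suppB u, i ≤ j

/-- maximal elements of the ideal generated by the support -/
def maxOf (u : ∀ i, Fin (k i) → F) : Finset ι :=
  (idealOf u).filter fun i => ∀ j ∈ idealOf u, i ≤ j → i = j

/-- maximal weight of a block -/
def Wblk (w : F → ℕ) (u : ∀ i, Fin (k i) → F) (i : ι) : ℕ :=
  Finset.univ.sup fun j => w (u i j)

/-- maximal value of the weight -/
def Mw (w : F → ℕ) : ℕ := Finset.univ.sup w

/-- minimal value of the weight on nonzero elements -/
def mw (w : F → ℕ) : ℕ := sInf (w '' {a | a ≠ 0})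

/-- the weighted poset block weight -/
def omegaW (w : F → ℕ) (u : ∀ i, Fin (k i) → F) : ℕ :=
  (∑ i ∈ maxOf u, Wblk w u i) + (idealOf u \ maxOf u).card * Mw w

/-- principal ideal generated by `i` -/
def pIdeal (i : ι) : Finset ι := Finset.univ.filter fun j => j ≤ i

end Defs


/-- `I` is an order ideal of the poset. -/
def IsIdealF [PartialOrder ι] (I : Finset ι) : Prop :=
  ∀ a ∈ I, ∀ b, b ≤ a → b ∈ I

section Aux
variable [Fintype ι] [PartialOrder ι] [Field F] [Fintype F] {k : ι → ℕ}

lemma mem_suppB {u : ∀ i, Fin (k i) → F} {i : ι} : i ∈ suppB u ↔ u i ≠ 0 := by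
  simp [suppB]

lemma mem_idealOf {u : ∀ i, Fin (k i) → F} {i : ι} :
    i ∈ idealOf u ↔ ∃ j ∈ suppB u, i ≤ j := by
  simp [idealOf]

lemma Wblk_le_Mw (w : F → ℕ) (u : ∀ i, Fin (k i) → F) (i : ι) :
    Wblk w u i ≤ Mw w := by
  apply Finset.sup_le
  intro j _
  exact Finset.le_sup (Finset.mem_univ _)

lemma omegaW_le_card_mul (w : F → ℕ) (u : ∀ i, Fin (k i) → F) :
    omegaW w u ≤ (idealOf u).card * Mw w := by
  have hsub : maxOf u ⊆ idealOf u := Finset.filter_subset _ _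
  have hcard : (maxOf u).card ≤ (idealOf u).card := Finset.card_le_card hsub
  have h1 : (∑ i ∈ maxOf u, Wblk w u i) ≤ (maxOf u).card * Mw w := by
    calc (∑ i ∈ maxOf u, Wblk w u i) ≤ ∑ _i ∈ maxOf u, Mw w :=
          Finset.sum_le_sum fun i _ => Wblk_le_Mw w u i
      _ = (maxOf u).card * Mw w := by rw [Finset.sum_const, smul_eq_mul]
  have h2 : (idealOf u \ maxOf u).card = (idealOf u).card - (maxOf u).card :=
    Finset.card_sdiff_of_subset hsub
  calc omegaW w u ≤ (maxOf u).card * Mw w + ((idealOf u).card - (maxOf u).card) * Mw w := by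
        rw [omegaW, h2]; exact Nat.add_le_add_right h1 _
    _ = ((maxOf u).card + ((idealOf u).card - (maxOf u).card)) * Mw w := by
        rw [Nat.add_mul]
    _ = (idealOf u).card * Mw w := by
        congr 1; omega

lemma omegaW_pos (w : F → ℕ) (hw0 : ∀ a : F, w a = 0 ↔ a = 0)
    {u : ∀ i, Fin (k i) → F} (hu : u ≠ 0) : 0 < omegaW w u := by
  classical
  have hs : (suppB u).Nonempty := by
    by_contra h
    apply hu
    funext i c
    have : i ∉ suppB u := fun hi => h ⟨i, hi⟩
    have : u i = 0 := by
      by_contra h'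
      exact this (mem_suppB.mpr h')
    simp [this]
  have hsid : suppB u ⊆ idealOf u := fun i hi => mem_idealOf.mpr ⟨i, hi, le_refl i⟩
  have hid : (idealOf u).Nonempty := hs.mono hsid
  obtain ⟨m, hm, hmax⟩ : ∃ m ∈ idealOf u, ∀ x ∈ idealOf u, ¬ m < x := by
    obtain ⟨m, hm⟩ := Finset.exists_maximal hid
    exact ⟨m, hm.1, fun x hx hlt => lt_irrefl m (lt_of_lt_of_le hlt (hm.2 hx hlt.le))⟩
  have hmMax : m ∈ maxOf u := by
    rw [maxOf, Finset.mem_filter]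
    refine ⟨hm, fun j hj hle => ?_⟩
    by_contra hne
    exact hmax j hj (lt_of_le_of_ne hle hne)
  have hmsupp : m ∈ suppB u := by
    obtain ⟨j, hj, hle⟩ := mem_idealOf.mp hm
    have : m = j := by
      by_contra hne
      exact hmax j (hsid hj) (lt_of_le_of_ne hle hne)
    rw [this]; exact hj
  have hune : u m ≠ 0 := mem_suppB.mp hmsupp
  obtain ⟨c, hc⟩ : ∃ c, u m c ≠ 0 := by
    by_contra h
    push_neg at h
    exact hune (funext h)
  have hW : 1 ≤ Wblk w u m := by
    have h1 : w (u m c) ≤ Wblk w u m :=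
      Finset.le_sup (f := fun j => w (u m j)) (Finset.mem_univ c)
    have h2 : w (u m c) ≠ 0 := fun h => hc ((hw0 _).mp h)
    omega
  have : 1 ≤ ∑ i ∈ maxOf u, Wblk w u i :=
    le_trans hW (Finset.single_le_sum (fun i _ => Nat.zero_le _) hmMax)
  rw [omegaW]
  omega

lemma mw_pos (w : F → ℕ) (hw0 : ∀ a : F, w a = 0 ↔ a = 0) : 1 ≤ mw w := by
  have hne : (w '' {a : F | a ≠ 0}).Nonempty := ⟨w 1, 1, one_ne_zero, rfl⟩
  obtain ⟨a, ha, hwa⟩ := Nat.sInf_mem hne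
  have : w a ≠ 0 := fun h => ha ((hw0 a).mp h)
  rw [mw, ← hwa] at *
  omega

end Aux

/-- Singleton bound for weighted poset block codes. -/
theorem stmt15 [Fintype ι] [PartialOrder ι] [Field F] [Fintype F] {k : ι → ℕ}
    (hk : ∀ i, 0 < k i)
    (w : F → ℕ)
    (hw0 : ∀ a : F, w a = 0 ↔ a = 0)
    (hwneg : ∀ a : F, w (-a) = w a)
    (hwadd : ∀ a b : F, w (a + b) ≤ w a + w b)
    (C : Finset (∀ i, Fin (k i) → F)) (d μ : ℕ)
    (hd : IsLeast {n | ∃ u ∈ C, ∃ v ∈ C, u ≠ v ∧ n = omegaW w (u - v)} d)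
    (hμ : IsGreatest
      {m | ∃ I : Finset ι, IsIdealF I ∧ I.card = (d - mw w) / Mw w ∧
        m = ∑ i ∈ I, k i} μ) :
    C.card ≤ Fintype.card F ^ ((∑ i, k i) - μ) := by
  classical
  obtain ⟨I, hIideal, hIcard, hμeq⟩ := hμ.1
  have hmw := mw_pos w hw0
  -- d is positive
  have hdpos : 0 < d := by
    obtain ⟨u, hu, v, hv, hne, hdeq⟩ := hd.1
    rw [hdeq]
    exact omegaW_pos w hw0 (sub_ne_zero.mpr hne)
  -- the restriction to coordinates outside I is injective on C
  set f : (∀ i, Fin (k i) → F) → (∀ i : {x : ι // x ∉ I}, Fin (k i.1) → F) :=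
    fun u i => u i.1 with hf
  have hinj : Set.InjOn f C := by
    intro u hu v hv hfe
    by_contra hne
    have hdle : d ≤ omegaW w (u - v) := hd.2 ⟨u, hu, v, hv, hne, rfl⟩
    -- support of u - v is inside I
    have hsupp : suppB (u - v) ⊆ I := by
      intro j hj
      by_contra hjI
      have := congrFun hfe ⟨j, hjI⟩
      simp only [f] at this
      have : (u - v) j = 0 := by
        rw [Pi.sub_apply, this, sub_self]
      exact mem_suppB.mp hj this
    have hideal : idealOf (u - v) ⊆ I := by
      intro i hi
      obtain ⟨j, hj, hle⟩ := mem_idealOf.mp hi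
      exact hIideal j (hsupp hj) i hle
    have hc : (idealOf (u - v)).card ≤ (d - mw w) / Mw w := by
      rw [← hIcard]
      exact Finset.card_le_card hideal
    have : omegaW w (u - v) ≤ (d - mw w) / Mw w * Mw w := by
      calc omegaW w (u - v) ≤ (idealOf (u - v)).card * Mw w :=
            omegaW_le_card_mul w (u - v)
        _ ≤ (d - mw w) / Mw w * Mw w := Nat.mul_le_mul_right _ hc
    have : omegaW w (u - v) ≤ d - mw w := le_trans this (Nat.div_mul_le_self _ _)
    omega
  -- counting
  have hcardle : C.card ≤ Fintype.card (∀ i : {x : ι // x ∉ I}, Fin (k i.1) → F) := by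
    rw [← Finset.card_univ]
    exact Finset.card_le_card_of_injOn f (fun a _ => Finset.mem_univ _) hinj
  have hcardpi : Fintype.card (∀ i : {x : ι // x ∉ I}, Fin (k i.1) → F)
      = ∏ i : {x : ι // x ∉ I}, Fintype.card F ^ (k i.1) := by
    simp [Fintype.card_pi]
  have hprod : ∏ i : {x : ι // x ∉ I}, Fintype.card F ^ (k i.1)
      = ∏ i ∈ Iᶜ, Fintype.card F ^ k i := by
    rw [Finset.prod_subtype Iᶜ (fun x => Finset.mem_compl) (fun i => Fintype.card F ^ k i)]
  have hsumc : ∑ i ∈ Iᶜ, k i = (∑ i, k i) - μ := by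
    have h := Finset.sum_compl_add_sum I k
    rw [hμeq]
    omega
  calc C.card ≤ Fintype.card (∀ i : {x : ι // x ∉ I}, Fin (k i.1) → F) := hcardle
    _ = ∏ i ∈ Iᶜ, Fintype.card F ^ k i := by rw [hcardpi, hprod]
    _ = Fintype.card F ^ ∑ i ∈ Iᶜ, k i := Finset.prod_pow_eq_pow_sum _ _ _
    _ = Fintype.card F ^ ((∑ i, k i) - μ) := by rw [hsumc]
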